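/- arXiv:1807.08141 — 5 statements merged into one kernel-verified Lean document; each statement's English description precedes it below -/
import Mathlib

section
/- The origin is a globally asymptotically stable equilibrium of x(t+1) = f(x(t), t), f(0, ·) = 0, if there exists W : ℝⁿ × ℕ → ℝ with k₁(‖ξ‖) ≤ W(ξ, τ) ≤ k₂(‖ξ‖, τ) for all (ξ, τ) (k₁ ∈ 𝒦∞, k₂(·, τ) ∈ 𝒦∞ for each τ) and W(f(ξ, τ), τ+1) − W(ξ, τ) ≤ −k₃(‖ξ‖) for all (ξ, τ), where k₃ : ℝ≥0 → ℝ≥0 is continuous and positive definite. In particular, no uniform (τ-independent) upper bound on W is required. -/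
open Filter

/-- A class 𝒦∞ function. -/
def ClassKInf (k : ℝ → ℝ) : Prop :=
  ContinuousOn k (Set.Ici 0) ∧ StrictMonoOn k (Set.Ici 0) ∧ k 0 = 0 ∧
    Tendsto k atTop atTop

/-- Lyapunov theorem for global asymptotic stability of the origin of
`x(t+1) = f(x(t), t)`: if `k₁(‖ξ‖) ≤ W(ξ,τ) ≤ k₂(‖ξ‖,τ)` (`k₁ ∈ 𝒦∞`, `k₂(·,τ) ∈ 𝒦∞` for
each `τ`) and `W(f(ξ,τ), τ+1) − W(ξ,τ) ≤ −k₃(‖ξ‖)` with `k₃` continuous and positive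
definite, then the origin is stable and globally attractive. No τ-uniform upper bound
on `W` is required. -/
theorem lyapunov_global_asymptotic_stability {n : ℕ}
    (f : EuclideanSpace ℝ (Fin n) → ℕ → EuclideanSpace ℝ (Fin n))
    (s : ℕ → ℕ → EuclideanSpace ℝ (Fin n) → EuclideanSpace ℝ (Fin n))
    (hf0 : ∀ τ : ℕ, f 0 τ = 0)
    (hs0 : ∀ (t0 : ℕ) (x0 : EuclideanSpace ℝ (Fin n)), s t0 t0 x0 = x0)
    (hstep : ∀ (t0 : ℕ) (x0 : EuclideanSpace ℝ (Fin n)) (t : ℕ), t0 ≤ t →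
      s (t + 1) t0 x0 = f (s t t0 x0) t)
    (W : EuclideanSpace ℝ (Fin n) → ℕ → ℝ)
    (k1 : ℝ → ℝ) (k2 : ℝ → ℕ → ℝ) (k3 : ℝ → ℝ)
    (hk1 : ClassKInf k1) (hk2 : ∀ τ : ℕ, ClassKInf (fun r => k2 r τ))
    (hk3cont : ContinuousOn k3 (Set.Ici 0))
    (hk3zero : k3 0 = 0) (hk3pos : ∀ r > (0 : ℝ), 0 < k3 r)
    (hlb : ∀ (ξ : EuclideanSpace ℝ (Fin n)) (τ : ℕ), k1 ‖ξ‖ ≤ W ξ τ)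
    (hub : ∀ (ξ : EuclideanSpace ℝ (Fin n)) (τ : ℕ), W ξ τ ≤ k2 ‖ξ‖ τ)
    (hdec : ∀ (ξ : EuclideanSpace ℝ (Fin n)) (τ : ℕ),
      W (f ξ τ) (τ + 1) - W ξ τ ≤ -k3 ‖ξ‖) :
    (∀ ε > (0 : ℝ), ∀ t0 : ℕ, ∃ δ > (0 : ℝ),
        ∀ x0 : EuclideanSpace ℝ (Fin n), ‖x0‖ < δ →
          ∀ t : ℕ, t0 ≤ t → ‖s t t0 x0‖ < ε) ∧
    (∀ (t0 : ℕ) (x0 : EuclideanSpace ℝ (Fin n)),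
        Tendsto (fun t : ℕ => ‖s t t0 x0‖) atTop (nhds 0)) := by
 -- proof
  have hk10 : k1 0 = 0 := hk1.2.2.1
  have hk3nonneg : ∀ r : ℝ, 0 ≤ r → 0 ≤ k3 r := by
    intro r hr
    rcases hr.eq_or_lt with h | h
    · simp [← h, hk3zero]
    · exact (hk3pos r h).le
  have hk1nonneg : ∀ r : ℝ, 0 ≤ r → 0 ≤ k1 r := by
    intro r hr
    rcases hr.eq_or_lt with h | h
    · simp [← h, hk10]
    · exact (hk10 ▸ hk1.2.1 Set.self_mem_Ici (Set.mem_Ici.mpr hr) h).le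
  have hstep' : ∀ (t0 : ℕ) (x0 : EuclideanSpace ℝ (Fin n)) (t : ℕ), t0 ≤ t →
      W (s (t + 1) t0 x0) (t + 1) ≤ W (s t t0 x0) t - k3 ‖s t t0 x0‖ := by
    intro t0 x0 t ht
    rw [hstep t0 x0 t ht]
    have := hdec (s t t0 x0) t
    linarith
  have hVle : ∀ (t0 : ℕ) (x0 : EuclideanSpace ℝ (Fin n)) (t : ℕ), t0 ≤ t →
      W (s t t0 x0) t ≤ W x0 t0 := by
    intro t0 x0 t ht
    induction t, ht using Nat.le_induction with
    | base => rw [hs0]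
    | succ t ht ih =>
      have h1 := hstep' t0 x0 t ht
      have h2 := hk3nonneg ‖s t t0 x0‖ (norm_nonneg _)
      linarith
  constructor
  · intro ε hε t0
    have hk1ε : 0 < k1 ε := by
      have := hk1.2.1 Set.self_mem_Ici (Set.mem_Ici.mpr hε.le) hε
      simpa [hk10] using this
    have hc : Tendsto (fun r => k2 r t0) (nhdsWithin 0 (Set.Ici 0)) (nhds 0) := by
      have := (hk2 t0).1 0 Set.self_mem_Ici
      simpa [ContinuousWithinAt, (hk2 t0).2.2.1] using this
    have hev : ∀ᶠ r in nhdsWithin 0 (Set.Ici 0), k2 r t0 < k1 ε :=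
      hc.eventually (eventually_lt_nhds hk1ε)
    obtain ⟨δ, hδ, hsub⟩ := mem_nhdsGE_iff_exists_Ico_subset.mp hev
    refine ⟨δ, hδ, fun x0 hx0 t ht => ?_⟩
    have h1 : k2 ‖x0‖ t0 < k1 ε := hsub ⟨norm_nonneg _, hx0⟩
    have h2 : k1 ‖s t t0 x0‖ ≤ k2 ‖x0‖ t0 :=
      (hlb _ _).trans ((hVle t0 x0 t ht).trans (hub _ _))
    by_contra h
    push_neg at h
    have h4 : k1 ε ≤ k1 ‖s t t0 x0‖ :=
      (hk1.2.1.monotoneOn) (Set.mem_Ici.mpr hε.le) (Set.mem_Ici.mpr (norm_nonneg _)) h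
    linarith
  · intro t0 x0
    set a : ℕ → ℝ := fun t => ‖s (t0 + t) t0 x0‖ with ha
    set V : ℕ → ℝ := fun t => W (s (t0 + t) t0 x0) (t0 + t) with hVdef
    have hVstep : ∀ t, V (t + 1) ≤ V t - k3 (a t) := by
      intro t
      have := hstep' t0 x0 (t0 + t) (Nat.le_add_right _ _)
      simpa [hVdef, ha, Nat.add_assoc] using this
    have hVanti : Antitone V := antitone_nat_of_succ_le (fun t => by
      have h1 := hVstep t
      have h2 := hk3nonneg (a t) (norm_nonneg _)
      linarith)
    have hV0 : ∀ t, 0 ≤ V t := fun t =>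
      (hk1nonneg _ (norm_nonneg _)).trans (hlb _ _)
    have hbdd : BddBelow (Set.range V) := ⟨0, by rintro _ ⟨t, rfl⟩; exact hV0 t⟩
    have hVtend : Tendsto V atTop (nhds (⨅ t, V t)) := tendsto_atTop_ciInf hVanti hbdd
    have hk3tend : Tendsto (fun t => k3 (a t)) atTop (nhds 0) := by
      have hdiff : Tendsto (fun t => V t - V (t + 1)) atTop (nhds 0) := by
        have := hVtend.sub (hVtend.comp (tendsto_add_atTop_nat 1))
        simpa using this
      refine squeeze_zero (fun t => hk3nonneg _ (norm_nonneg _)) (fun t => ?_) hdiff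
      have := hVstep t; linarith
    obtain ⟨R, hR⟩ := Filter.eventually_atTop.mp (hk1.2.2.2.eventually_ge_atTop (V 0 + 1))
    set R' : ℝ := max R 0 with hR'
    have haR : ∀ t, a t ≤ R' := by
      intro t
      by_contra h
      push_neg at h
      have h1 : V 0 + 1 ≤ k1 (a t) := hR (a t) ((le_max_left _ _).trans h.le)
      have h2 : k1 (a t) ≤ V t := hlb _ _
      have h3 : V t ≤ V 0 := hVanti (Nat.zero_le t)
      linarith
    rw [Metric.tendsto_atTop]
    intro ε hε
    have key : ∃ N, ∀ t ≥ N, a t < ε := by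
      by_cases hεR : ε ≤ R'
      · have hKne : (Set.Icc ε R').Nonempty := ⟨ε, le_refl _, hεR⟩
        have hKsub : Set.Icc ε R' ⊆ Set.Ici 0 := fun x hx => hε.le.trans hx.1
        obtain ⟨c, hcK, hcmin⟩ :=
          isCompact_Icc.exists_isMinOn hKne (hk3cont.mono hKsub)
        have hm : 0 < k3 c := hk3pos c (lt_of_lt_of_le hε hcK.1)
        obtain ⟨N, hN⟩ :=
          Filter.eventually_atTop.mp (hk3tend.eventually (eventually_lt_nhds hm))
        refine ⟨N, fun t ht => ?_⟩
        by_contra h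
        push_neg at h
        have hmem : a t ∈ Set.Icc ε R' := ⟨h, haR t⟩
        have : k3 c ≤ k3 (a t) := isMinOn_iff.mp hcmin (a t) hmem
        exact absurd (hN t ht) (not_lt.mpr this)
      · push_neg at hεR
        exact ⟨0, fun t _ => lt_of_le_of_lt (haR t) hεR⟩
    obtain ⟨N, hN⟩ := key
    refine ⟨t0 + N, fun t ht => ?_⟩
    have h2 : N ≤ t - t0 := by omega
    have h3 := hN (t - t0) h2
    rw [Real.dist_eq, sub_zero, abs_of_nonneg (norm_nonneg _)]
    simp only [ha] at h3
    have heq : t0 + (t - t0) = t := by omega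
    rwa [heq] at h3
end

section
/- Under the Lyapunov conditions k₁(‖ξ‖) ≤ W(ξ, τ) with k₁ ∈ 𝒦∞ and one-step decrease ΔW ≤ −k₃(‖ξ‖) with k₃ positive definite satisfying inf_{z≥c} k₃(z) > 0 for all c > 0, every trajectory of x(t+1) = f(x(t), t) converges to the origin: lim_{t→∞} ‖s(t, t₀, x₀)‖ = 0 for every x₀ ∈ ℝⁿ and t₀ ∈ ℕ. -/
open Filter

/-- Under the Lyapunov conditions `k₁(‖ξ‖) ≤ W(ξ,τ)` with `k₁ ∈ 𝒦∞` and
one-step decrease `W(f(ξ,τ),τ+1) − W(ξ,τ) ≤ −k₃(‖ξ‖)` with `k₃` positive definite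
satisfying `inf_{z ≥ c} k₃(z) > 0` for all `c > 0`, every trajectory of
`x(t+1) = f(x(t),t)` converges to the origin. -/
theorem lyapunov_global_attractivity {n : ℕ}
    (f : EuclideanSpace ℝ (Fin n) → ℕ → EuclideanSpace ℝ (Fin n))
    (s : ℕ → ℕ → EuclideanSpace ℝ (Fin n) → EuclideanSpace ℝ (Fin n))
    (hf0 : ∀ τ : ℕ, f 0 τ = 0)
    (hs0 : ∀ (t0 : ℕ) (x0 : EuclideanSpace ℝ (Fin n)), s t0 t0 x0 = x0)
    (hstep : ∀ (t0 : ℕ) (x0 : EuclideanSpace ℝ (Fin n)) (t : ℕ), t0 ≤ t →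
      s (t + 1) t0 x0 = f (s t t0 x0) t)
    (W : EuclideanSpace ℝ (Fin n) → ℕ → ℝ)
    (k1 : ℝ → ℝ) (k3 : ℝ → ℝ)
    (hk1 : ClassKInf k1)
    (hk3cont : ContinuousOn k3 (Set.Ici 0))
    (hk3zero : k3 0 = 0) (hk3pos : ∀ r > (0 : ℝ), 0 < k3 r)
    (hk3inf : ∀ c > (0 : ℝ), 0 < sInf (k3 '' Set.Ici c))
    (hlb : ∀ (ξ : EuclideanSpace ℝ (Fin n)) (τ : ℕ), k1 ‖ξ‖ ≤ W ξ τ)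
    (hdec : ∀ (ξ : EuclideanSpace ℝ (Fin n)) (τ : ℕ),
      W (f ξ τ) (τ + 1) - W ξ τ ≤ -k3 ‖ξ‖) :
    ∀ (t0 : ℕ) (x0 : EuclideanSpace ℝ (Fin n)),
      Tendsto (fun t : ℕ => ‖s t t0 x0‖) atTop (nhds 0) := by
  intro t0 x0
  obtain ⟨-, hk1mono, hk1zero, -⟩ := hk1
  -- W is nonnegative
  have hWnn : ∀ (ξ : EuclideanSpace ℝ (Fin n)) (τ : ℕ), 0 ≤ W ξ τ := by
    intro ξ τ
    have h0 : k1 0 ≤ k1 ‖ξ‖ :=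
      hk1mono.monotoneOn Set.self_mem_Ici (norm_nonneg ξ) (norm_nonneg ξ)
    rw [hk1zero] at h0
    exact h0.trans (hlb ξ τ)
  set g : ℕ → ℝ := fun t => W (s (t0 + t) t0 x0) (t0 + t) with hg
  have hgdec : ∀ t : ℕ, g (t + 1) ≤ g t - k3 ‖s (t0 + t) t0 x0‖ := by
    intro t
    have hstep' : s (t0 + t + 1) t0 x0 = f (s (t0 + t) t0 x0) (t0 + t) :=
      hstep t0 x0 (t0 + t) (Nat.le_add_right _ _)
    have hd := hdec (s (t0 + t) t0 x0) (t0 + t)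
    have : g (t + 1) = W (f (s (t0 + t) t0 x0) (t0 + t)) (t0 + t + 1) := by
      simp only [hg]
      rw [show t0 + (t + 1) = t0 + t + 1 by omega, hstep']
    rw [this]
    linarith
  have hgnn : ∀ t : ℕ, 0 ≤ g t := fun t => hWnn _ _
  rw [Metric.tendsto_atTop]
  intro ε hε
  -- the infimum of k3 on [ε, ∞)
  set δ : ℝ := sInf (k3 '' Set.Ici ε) with hδ
  have hδpos : 0 < δ := hk3inf ε hε
  have hbdd : BddBelow (k3 '' Set.Ici ε) := by
    by_contra h
    rw [hδ, Real.sInf_of_not_bddBelow h] at hδpos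
    exact lt_irrefl _ hδpos
  have hδle : ∀ z : ℝ, ε ≤ z → δ ≤ k3 z := by
    intro z hz
    exact csInf_le hbdd ⟨z, hz, rfl⟩
  -- the set of "bad" times
  set P : ℕ → Prop := fun t => ε ≤ ‖s (t0 + t) t0 x0‖ with hP
  have hPdec : DecidablePred P := fun t => Real.decidableLE _ _
  -- key inequality
  have key : ∀ T : ℕ,
      g T ≤ g 0 - δ * ((Finset.range T).filter P).card := by
    intro T
    induction T with
    | zero => simp
    | succ T ih =>
      rw [Finset.range_add_one, Finset.filter_insert]
      by_cases hT : P T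
      · rw [if_pos hT]
        have hcard : (insert T ((Finset.range T).filter P)).card
            = ((Finset.range T).filter P).card + 1 := by
          rw [Finset.card_insert_of_notMem]
          simp
        rw [hcard]
        have h1 : δ ≤ k3 ‖s (t0 + T) t0 x0‖ := hδle _ hT
        have h2 := hgdec T
        push_cast
        nlinarith
      · rw [if_neg hT]
        have h2 := hgdec T
        have h3 : 0 ≤ k3 ‖s (t0 + T) t0 x0‖ := by
          rcases eq_or_lt_of_le (norm_nonneg (s (t0 + T) t0 x0)) with h | h
          · rw [← h, hk3zero]
          · exact (hk3pos _ h).le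
        linarith
  -- card bound
  have hcardbd : ∀ T : ℕ, (((Finset.range T).filter P).card : ℝ) ≤ g 0 / δ := by
    intro T
    have h1 := key T
    have h2 := hgnn T
    rw [le_div_iff₀ hδpos, mul_comm]
    linarith
  -- finiteness of bad times
  have hfin : {t : ℕ | P t}.Finite := by
    by_contra h
    have h' : {t : ℕ | P t}.Infinite := h
    obtain ⟨F, hFsub, hFcard⟩ :=
      h'.exists_subset_card_eq (Nat.floor (g 0 / δ) + 1)
    obtain ⟨M, hM⟩ := F.bddAbove
    have hsub : F ⊆ (Finset.range (M + 1)).filter P := by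
      intro x hx
      rw [Finset.mem_filter, Finset.mem_range]
      exact ⟨Nat.lt_succ_of_le (hM hx), hFsub hx⟩
    have h1 := Finset.card_le_card hsub
    have h2 : (((Finset.range (M + 1)).filter P).card : ℝ) ≤ g 0 / δ :=
      hcardbd (M + 1)
    have h3 : ((Finset.range (M + 1)).filter P).card ≤ Nat.floor (g 0 / δ) :=
      Nat.le_floor h2
    omega
  -- conclusion
  obtain ⟨M, hM⟩ := hfin.bddAbove
  refine ⟨t0 + M + 1, fun t ht => ?_⟩
  have ht0 : t0 ≤ t := by omega
  have hnot : ¬ P (t - t0) := by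
    intro hPt
    have := hM hPt
    omega
  rw [Real.dist_eq, sub_zero, abs_of_nonneg (norm_nonneg _)]
  by_contra hc
  push_neg at hc
  apply hnot
  show ε ≤ ‖s (t0 + (t - t0)) t0 x0‖
  rw [show t0 + (t - t0) = t by omega]
  exact hc
end

section
/- Along the recursive least squares error dynamics θ̃(k+1) = θ̃(k) − α(k) Σ(k) φ(k+1) φᵀ(k+1) θ̃(k), with α(k) = (σ² + φᵀ(k+1) Σ(k) φ(k+1))⁻¹ and Σ⁻¹(k+1) = Σ⁻¹(k) + σ⁻² φ(k+1) φᵀ(k+1), the Lyapunov function W_C(ξ, τ) = ξᵀ Σ⁻¹(τ) ξ has one-step difference exactly ΔW_C(k) = − (θ̃ᵀ(k) φ(k+1))² / (σ² + φᵀ(k+1) Σ(k) φ(k+1)). -/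
open Matrix

private lemma rls_aux {n : ℕ} (σ : ℝ) (hσ : 0 < σ)
    (S P : Matrix (Fin n) (Fin n) ℝ)
    (hPS : P * S = 1) (hPsymm : Pᵀ = P)
    (v θ : Fin n → ℝ) (hβ0 : 0 ≤ v ⬝ᵥ (S *ᵥ v))
    (α : ℝ) (hα : α = (σ ^ 2 + v ⬝ᵥ (S *ᵥ v))⁻¹) :
    (θ - (α * (v ⬝ᵥ θ)) • (S *ᵥ v)) ⬝ᵥ
        ((P + (σ ^ 2)⁻¹ • Matrix.vecMulVec v v) *ᵥ (θ - (α * (v ⬝ᵥ θ)) • (S *ᵥ v)))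
      - θ ⬝ᵥ (P *ᵥ θ) =
      -(θ ⬝ᵥ v) ^ 2 / (σ ^ 2 + v ⬝ᵥ (S *ᵥ v)) := by
  have hPw : P *ᵥ (S *ᵥ v) = v := by
    rw [Matrix.mulVec_mulVec, hPS, Matrix.one_mulVec]
  have hsymmP : ∀ x y : Fin n → ℝ, x ⬝ᵥ (P *ᵥ y) = (P *ᵥ x) ⬝ᵥ y := by
    intro x y
    rw [Matrix.dotProduct_mulVec, ← Matrix.mulVec_transpose, hPsymm]
  have hvv : ∀ x : Fin n → ℝ, Matrix.vecMulVec v v *ᵥ x = (v ⬝ᵥ x) • v := by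
    intro x
    ext i
    simp [Matrix.vecMulVec_apply, Matrix.mulVec, dotProduct, Finset.mul_sum,
      mul_comm, mul_assoc, mul_left_comm]
  rw [Matrix.add_mulVec, Matrix.mulVec_sub, Matrix.mulVec_smul, Matrix.smul_mulVec, hvv]
  simp only [dotProduct_sub, sub_dotProduct, dotProduct_add,
    dotProduct_smul, smul_dotProduct, smul_eq_mul]
  rw [hPw, hsymmP (S *ᵥ v) θ, hPw]
  rw [dotProduct_comm (S *ᵥ v) v, dotProduct_comm θ v]
  have h1 : (σ : ℝ) ^ 2 ≠ 0 := by positivity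
  have ha : σ ^ 2 + v ⬝ᵥ (S *ᵥ v) ≠ 0 := by positivity
  rw [hα]
  field_simp
  ring

/-- Along the RLS error dynamics
`θ̃(k+1) = θ̃(k) − α(k) Σ(k) φ(k+1) φᵀ(k+1) θ̃(k)` with
`α(k) = (σ² + φᵀ(k+1) Σ(k) φ(k+1))⁻¹` and `Σ⁻¹(k+1) = Σ⁻¹(k) + σ⁻² φ(k+1) φᵀ(k+1)`,
the Lyapunov function `W_C(ξ,τ) = ξᵀ Σ⁻¹(τ) ξ` has one-step difference exactly
`ΔW_C(k) = −(θ̃ᵀ(k) φ(k+1))² / (σ² + φᵀ(k+1) Σ(k) φ(k+1))`. -/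
theorem rls_lyapunov_difference_identity {n : ℕ}
    (σ : ℝ) (hσ : 0 < σ)
    (φ : ℕ → Fin n → ℝ)
    (Smat Sinv : ℕ → Matrix (Fin n) (Fin n) ℝ)
    (hpd : ∀ k : ℕ, (Smat k).PosDef)
    (hinv : ∀ k : ℕ, Sinv k = (Smat k)⁻¹)
    (hrec : ∀ k : ℕ, Sinv (k + 1) =
      Sinv k + (σ ^ 2)⁻¹ • Matrix.vecMulVec (φ (k + 1)) (φ (k + 1)))
    (α : ℕ → ℝ)
    (hα : ∀ k : ℕ, α k = (σ ^ 2 + φ (k + 1) ⬝ᵥ (Smat k *ᵥ φ (k + 1)))⁻¹)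
    (θt : ℕ → Fin n → ℝ)
    (hθ : ∀ k : ℕ, θt (k + 1) =
      θt k - (α k * (φ (k + 1) ⬝ᵥ θt k)) • (Smat k *ᵥ φ (k + 1))) :
    ∀ k : ℕ,
      θt (k + 1) ⬝ᵥ (Sinv (k + 1) *ᵥ θt (k + 1)) - θt k ⬝ᵥ (Sinv k *ᵥ θt k) =
        -(θt k ⬝ᵥ φ (k + 1)) ^ 2 / (σ ^ 2 + φ (k + 1) ⬝ᵥ (Smat k *ᵥ φ (k + 1))) := by
  intro k
  have hSsymm : (Smat k)ᵀ = Smat k := by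
    simpa [Matrix.IsHermitian] using (hpd k).isHermitian
  have hPS : Sinv k * Smat k = 1 := by
    rw [hinv k]
    exact Matrix.nonsing_inv_mul (Smat k)
      ((Matrix.isUnit_iff_isUnit_det (Smat k)).1 (hpd k).isUnit)
  have hPsymm : (Sinv k)ᵀ = Sinv k := by
    rw [hinv k, Matrix.transpose_nonsing_inv, hSsymm]
  have hβ0 : 0 ≤ φ (k + 1) ⬝ᵥ (Smat k *ᵥ φ (k + 1)) := by
    simpa using (hpd k).posSemidef.dotProduct_mulVec_nonneg (φ (k + 1))
  rw [hθ k, hrec k]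
  exact rls_aux σ hσ (Smat k) (Sinv k) hPS hPsymm (φ (k + 1)) (θt k) hβ0 (α k) (hα k)
end

section
/- For the recursive LSE error dynamics, the one-step difference of W_C(ξ, τ) = ξᵀ Σ⁻¹(τ) ξ is strictly negative at step k whenever θ̃(k) and φ(k+1) are not orthogonal, i.e., θ̃ᵀ(k) φ(k+1) ≠ 0 implies W_C(θ̃(k+1), k+1) < W_C(θ̃(k), k). -/
open Matrix

lemma vecMulVec_mulVec_eq {n : ℕ} (w v x : Fin n → ℝ) :
    (Matrix.vecMulVec w v) *ᵥ x = (v ⬝ᵥ x) • w := by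
  ext i
  simp [Matrix.mulVec, Matrix.vecMulVec_apply, dotProduct, mul_comm, mul_assoc,
    mul_left_comm, ← Finset.mul_sum]

/-- For the recursive LSE error dynamics, the one-step difference of
`W_C(ξ,τ) = ξᵀ Σ⁻¹(τ) ξ` is strictly negative at step `k` whenever `θ̃(k)` and `φ(k+1)`
are not orthogonal. -/
theorem rls_lyapunov_strict_decrease {n : ℕ}
    (σ : ℝ) (hσ : 0 < σ)
    (φ : ℕ → Fin n → ℝ)
    (Smat Sinv : ℕ → Matrix (Fin n) (Fin n) ℝ)
    (hpd : ∀ k : ℕ, (Smat k).PosDef)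
    (hinv : ∀ k : ℕ, Sinv k = (Smat k)⁻¹)
    (hrec : ∀ k : ℕ, Sinv (k + 1) =
      Sinv k + (σ ^ 2)⁻¹ • Matrix.vecMulVec (φ (k + 1)) (φ (k + 1)))
    (α : ℕ → ℝ)
    (hα : ∀ k : ℕ, α k = (σ ^ 2 + φ (k + 1) ⬝ᵥ (Smat k *ᵥ φ (k + 1)))⁻¹)
    (θt : ℕ → Fin n → ℝ)
    (hθ : ∀ k : ℕ, θt (k + 1) =
      θt k - (α k * (φ (k + 1) ⬝ᵥ θt k)) • (Smat k *ᵥ φ (k + 1))) :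
    ∀ k : ℕ, θt k ⬝ᵥ φ (k + 1) ≠ 0 →
      θt (k + 1) ⬝ᵥ (Sinv (k + 1) *ᵥ θt (k + 1)) < θt k ⬝ᵥ (Sinv k *ᵥ θt k) := by
  intro k hne
  have hθ1 := hθ k
  have hrec1 := hrec k
  have hα1 := hα k
  set v := φ (k + 1) with hvdef
  set θ := θt k with hθdef
  set P := Smat k with hPdef
  set Q := Sinv k with hQdef
  set θ' := θt (k + 1) with hθ'def
  set β := v ⬝ᵥ θ with hβdef
  set s := v ⬝ᵥ (P *ᵥ v) with hsdef
  set a := α k with hadef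
  clear_value v θ P Q θ' β s a
  -- basic scalar facts
  have hβne : β ≠ 0 := by rwa [hβdef, dotProduct_comm]
  have hvne : v ≠ 0 := by
    intro h
    apply hβne
    rw [hβdef, h, zero_dotProduct]
  have hspos : 0 < s := by
    rw [hsdef, hPdef]
    simpa using (hpd k).dotProduct_mulVec_pos hvne
  have hden : 0 < σ ^ 2 + s := by positivity
  have hapos : 0 < a := by rw [hα1]; exact inv_pos.mpr hden
  have haeq : a * (σ ^ 2 + s) = 1 := by
    rw [hα1]; exact inv_mul_cancel₀ hden.ne'
  -- matrix facts
  have hdet : IsUnit (Smat k).det := isUnit_iff_ne_zero.mpr (hpd k).det_pos.ne'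
  have hQP : Q * P = 1 := by
    rw [hQdef, hPdef, hinv k]; exact Matrix.nonsing_inv_mul _ hdet
  have hPQ : P * Q = 1 := by
    rw [hQdef, hPdef, hinv k]; exact Matrix.mul_nonsing_inv _ hdet
  have hPsym : Pᵀ = P := by rw [hPdef]; exact (hpd k).1
  have hQPv : ∀ x : Fin n → ℝ, Q *ᵥ (P *ᵥ x) = x := fun x => by
    rw [Matrix.mulVec_mulVec, hQP, Matrix.one_mulVec]
  have hPQv : ∀ x : Fin n → ℝ, P *ᵥ (Q *ᵥ x) = x := fun x => by
    rw [Matrix.mulVec_mulVec, hPQ, Matrix.one_mulVec]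
  have hPdot : ∀ x y : Fin n → ℝ, (P *ᵥ x) ⬝ᵥ y = x ⬝ᵥ (P *ᵥ y) := fun x y => by
    rw [dotProduct_mulVec, ← Matrix.mulVec_transpose, hPsym, dotProduct_comm]
  -- key vector computations
  have hθ1' : θ' = θ - (a * β) • (P *ᵥ v) := hθ1
  have hvθ' : v ⬝ᵥ θ' = β - a * β * s := by
    rw [hθ1', dotProduct_sub, dotProduct_smul, smul_eq_mul, ← hβdef, ← hsdef]
  have hQθ' : Q *ᵥ θ' = Q *ᵥ θ - (a * β) • v := by
    rw [hθ1', Matrix.mulVec_sub, Matrix.mulVec_smul, hQPv]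
  -- expand the new quadratic form
  have hSinv' : Sinv (k + 1) *ᵥ θ' = Q *ᵥ θ' + ((σ ^ 2)⁻¹ * (v ⬝ᵥ θ')) • v := by
    rw [hrec1, Matrix.add_mulVec, Matrix.smul_mulVec, vecMulVec_mulVec_eq,
      smul_smul]
  have hPvQθ : (P *ᵥ v) ⬝ᵥ (Q *ᵥ θ) = β := by
    rw [hPdot, hPQv, hβdef]
  have hPvv : (P *ᵥ v) ⬝ᵥ v = s := by rw [dotProduct_comm, hsdef]
  have hθv : θ ⬝ᵥ v = β := by rw [dotProduct_comm, hβdef]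
  have hθ'Qθ' : θ' ⬝ᵥ (Q *ᵥ θ') = θ ⬝ᵥ (Q *ᵥ θ) - 2 * a * β ^ 2 + a ^ 2 * β ^ 2 * s := by
    rw [hQθ', hθ1']
    rw [sub_dotProduct, dotProduct_sub, dotProduct_sub, smul_dotProduct,
      smul_dotProduct, dotProduct_smul, dotProduct_smul, hPvQθ, hPvv]
    rw [hθv]
    simp only [smul_eq_mul]
    ring
  have hθ'v : θ' ⬝ᵥ v = β - a * β * s := by rw [dotProduct_comm]; exact hvθ'
  have hW' : θ' ⬝ᵥ (Sinv (k + 1) *ᵥ θ') =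
      θ ⬝ᵥ (Q *ᵥ θ) - 2 * a * β ^ 2 + a ^ 2 * β ^ 2 * s
        + (σ ^ 2)⁻¹ * (β - a * β * s) ^ 2 := by
    rw [hSinv', dotProduct_add, hθ'Qθ', dotProduct_smul, smul_eq_mul, hθ'v, hvθ']
    ring
  -- reduce to scalar inequality
  rw [hW']
  have h1 : 1 - a * s = a * σ ^ 2 := by linarith [haeq, show a * (σ ^ 2 + s) = a * σ ^ 2 + a * s from by ring]
  have hkey : (-2) * a * β ^ 2 + a ^ 2 * β ^ 2 * s
      + (σ ^ 2)⁻¹ * (β - a * β * s) ^ 2 = -(a * β ^ 2) := by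
    have hσ2 : (σ : ℝ) ^ 2 ≠ 0 := by positivity
    have h2 : (β - a * β * s) = β * (a * σ ^ 2) := by
      rw [← h1]; ring
    have h3 : (σ ^ 2)⁻¹ * (β * (a * σ ^ 2)) ^ 2 = a ^ 2 * β ^ 2 * σ ^ 2 := by
      field_simp
    rw [h2, h3]
    have h4 : a ^ 2 * β ^ 2 * s + a ^ 2 * β ^ 2 * σ ^ 2 = a * β ^ 2 := by
      rw [show a ^ 2 * β ^ 2 * s + a ^ 2 * β ^ 2 * σ ^ 2
        = a * β ^ 2 * (a * (σ ^ 2 + s)) from by ring, haeq, mul_one]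
    linarith [h4]
  have hβ2 : 0 < β ^ 2 := by positivity
  have hfin : 0 < a * β ^ 2 := mul_pos hapos hβ2
  linarith [hkey, hfin]
end

section
/- For the distributed estimator with common gain αᵢ = α_B := (σ² + Σ_{j=1}^m φⱼᵀ(k+1) Σⱼ(k) φⱼ(k+1))⁻¹, the 'Σ_B⁻¹(k)-part' of the Lyapunov difference satisfies the exact identity ΔW̄_B = −α_B (θ̃_Bᵀ φ)² (2 − α_B φᵀ Σ_B φ), where φ = φ(k+1), Σ_B = Σ_B(k), θ̃_B = θ̃_B(k), and θ̃_B(k+1) = (I − α_B Σ_B φ φᵀ) θ̃_B(k). -/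
open Matrix

/-- For the distributed estimator with common gain
`α_B = (σ² + Σⱼ φⱼᵀ Σⱼ φⱼ)⁻¹`, the `Σ_B⁻¹(k)`-part of the Lyapunov difference
satisfies the exact identity `ΔW̄_B = −α_B (θ̃_Bᵀ φ)² (2 − α_B φᵀ Σ_B φ)`, where
`θ̃_B(k+1) = (I − α_B Σ_B φ φᵀ) θ̃_B(k)`. -/
theorem distributed_frozen_lyapunov_difference {m : ℕ} (nd : Fin m → ℕ)
    (Si : (i : Fin m) → Matrix (Fin (nd i)) (Fin (nd i)) ℝ)
    (hSi : ∀ i : Fin m, (Si i).PosDef)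
    (SB : Matrix ((i : Fin m) × Fin (nd i)) ((i : Fin m) × Fin (nd i)) ℝ)
    (hSB : SB = Matrix.blockDiagonal' Si)
    (φi : (i : Fin m) → Fin (nd i) → ℝ)
    (φ : ((i : Fin m) × Fin (nd i)) → ℝ)
    (hφ : ∀ p : (i : Fin m) × Fin (nd i), φ p = φi p.1 p.2)
    (σ : ℝ) (hσ : 0 < σ)
    (αB : ℝ) (hαB : αB = (σ ^ 2 + ∑ j, φi j ⬝ᵥ (Si j *ᵥ φi j))⁻¹)
    (θt θtnew : ((i : Fin m) × Fin (nd i)) → ℝ)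
    (hθtnew : θtnew = θt - (αB * (φ ⬝ᵥ θt)) • (SB *ᵥ φ)) :
    θtnew ⬝ᵥ (SB⁻¹ *ᵥ θtnew) - θt ⬝ᵥ (SB⁻¹ *ᵥ θt) =
      -(αB * (θt ⬝ᵥ φ) ^ 2 * (2 - αB * (φ ⬝ᵥ (SB *ᵥ φ)))) := by
  -- SB is symmetric
  have hsym : SBᵀ = SB := by
    rw [hSB, Matrix.blockDiagonal'_transpose]
    exact congrArg _ (funext fun i => (hSi i).isHermitian.eq)
  -- SB is invertible, with right inverse the block diagonal of inverses
  have hright : SB * Matrix.blockDiagonal' (fun i => (Si i)⁻¹) = 1 := by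
    rw [hSB, ← Matrix.blockDiagonal'_mul, ← Matrix.blockDiagonal'_one]
    exact congrArg _ (funext fun i => Matrix.mul_nonsing_inv _ (hSi i).det_pos.ne'.isUnit)
  have hinv : SB⁻¹ = Matrix.blockDiagonal' (fun i => (Si i)⁻¹) :=
    Matrix.inv_eq_right_inv hright
  have hmul : SB * SB⁻¹ = 1 := by rw [hinv]; exact hright
  have hmul' : SB⁻¹ * SB = 1 := mul_eq_one_comm.mp hmul
  set c := αB * (φ ⬝ᵥ θt) with hc
  have h1 : SB⁻¹ *ᵥ (SB *ᵥ φ) = φ := by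
    rw [Matrix.mulVec_mulVec, hmul', Matrix.one_mulVec]
  have hSBinvsym : SB⁻¹ᵀ = SB⁻¹ := by rw [Matrix.transpose_nonsing_inv, hsym]
  have h2 : (SB *ᵥ φ) ⬝ᵥ (SB⁻¹ *ᵥ θt) = θt ⬝ᵥ φ := by
    rw [dotProduct_comm, Matrix.dotProduct_mulVec, ← Matrix.mulVec_transpose,
      hsym, Matrix.mulVec_mulVec, hmul, Matrix.one_mulVec]
  have h3 : (SB *ᵥ φ) ⬝ᵥ φ = φ ⬝ᵥ (SB *ᵥ φ) := dotProduct_comm _ _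
  have h4 : θt ⬝ᵥ φ = φ ⬝ᵥ θt := dotProduct_comm _ _
  rw [hθtnew]
  simp only [Matrix.mulVec_sub, Matrix.mulVec_smul, sub_dotProduct,
    dotProduct_sub, smul_dotProduct, dotProduct_smul,
    h1, h2, h3, h4, smul_eq_mul]
  ring
end
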